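/- Let f : X → Y be a continuous map between sober topological spaces. If f is a closed map and surjective, then the Krull dimension of X is at least the Krull dimension of Y. -/

import Mathlib

open TopologicalSpace Order

lemma going_up {X Y : Type*} [TopologicalSpace X] [TopologicalSpace Y]
    {f : X → Y} (hclosed : IsClosedMap f) {x₁ : X} {y₂ : Y}
    (hspec : f x₁ ⤳ y₂) : ∃ x₂, x₁ ⤳ x₂ ∧ f x₂ = y₂ := by
  have h1 : closure {f x₁} ⊆ f '' closure {x₁} := by
    apply closure_minimal _ (hclosed _ isClosed_closure)
    exact Set.singleton_subset_iff.mpr ⟨x₁, subset_closure rfl, rfl⟩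
  obtain ⟨x₂, hx₂, hfx₂⟩ := h1 hspec.mem_closure
  exact ⟨x₂, specializes_iff_mem_closure.mpr hx₂, hfx₂⟩

lemma lift_chain {X Y : Type*} [TopologicalSpace X] [TopologicalSpace Y]
    {f : X → Y} (hclosed : IsClosedMap f) (hsurj : Function.Surjective f) :
    ∀ (n : ℕ) (y : Fin (n + 1) → Y), (∀ i : Fin n, y i.castSucc ⤳ y i.succ) →
      ∃ x : Fin (n + 1) → X, (∀ i, f (x i) = y i) ∧
        ∀ i : Fin n, x i.castSucc ⤳ x i.succ := by
  intro n
  induction n with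
  | zero =>
    intro y _
    obtain ⟨x0, hx0⟩ := hsurj (y 0)
    exact ⟨fun _ => x0, fun i => by rw [Fin.fin_one_eq_zero i]; exact hx0,
      fun i => i.elim0⟩
  | succ n ih =>
    intro y hy
    obtain ⟨x, hfx, hx⟩ := ih (y ∘ Fin.castSucc) (fun i => hy i.castSucc)
    have hspec : f (x (Fin.last n)) ⤳ y (Fin.last (n + 1)) := by
      rw [hfx]
      exact hy (Fin.last n)
    obtain ⟨xl, hxl, hfxl⟩ := going_up hclosed hspec
    refine ⟨Fin.snoc x xl, ?_, ?_⟩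
    · intro i
      refine Fin.lastCases ?_ (fun j => ?_) i
      · simpa using hfxl
      · simpa using hfx j
    · intro i
      refine Fin.lastCases ?_ (fun j => ?_) i
      · simpa [Fin.snoc_castSucc] using hxl
      · have := hx j
        simpa only [Fin.succ_castSucc, Fin.snoc_castSucc] using this

/-- Let `f : X → Y` be a continuous map between sober topological spaces. If `f` is a closed
map and surjective, then the Krull dimension of `X` is at least the Krull dimension of `Y`. -/
theorem stmt_1 {X Y : Type*} [TopologicalSpace X] [TopologicalSpace Y]
    [QuasiSober X] [T0Space X] [QuasiSober Y] [T0Space Y]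
    (f : X → Y) (hf : Continuous f) (hclosed : IsClosedMap f)
    (hsurj : Function.Surjective f) :
    topologicalKrullDim Y ≤ topologicalKrullDim X := by
  rw [topologicalKrullDim, topologicalKrullDim, krullDim, krullDim]
  apply iSup_le
  intro p
  set n := p.length with hn
  let y : Fin (n + 1) → Y := fun i => (p i).isIrreducible'.genericPoint
  have hgen : ∀ i, IsGenericPoint (y i) (p i) := fun i =>
    (p i).isIrreducible'.isGenericPoint_genericPoint (p i).isClosed'
  have hyne : ∀ i j : Fin (n + 1), p i ≠ p j → y i ≠ y j := by
    intro i j hij h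
    apply hij
    apply IrreducibleCloseds.ext
    rw [← (hgen i).def, ← (hgen j).def, h]
  have hyspec : ∀ j : Fin n, (y ∘ Fin.rev) j.castSucc ⤳ (y ∘ Fin.rev) j.succ := by
    intro j
    simp only [Function.comp, Fin.rev_castSucc, Fin.rev_succ]
    have h1 : (p j.rev.castSucc : Set Y) ⊆ (p j.rev.succ : Set Y) :=
      le_of_lt (p.step j.rev)
    exact (hgen j.rev.succ).specializes (h1 (hgen j.rev.castSucc).mem)
  obtain ⟨x, hfx, hx⟩ := lift_chain hclosed hsurj n (y ∘ Fin.rev) hyspec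
  let q : LTSeries (IrreducibleCloseds X) :=
    { length := n
      toFun := fun i => ⟨closure {x i.rev}, isIrreducible_singleton.closure, isClosed_closure⟩
      step := by
        intro i
        have hsub : closure ({x i.rev.succ} : Set X) ⊆ closure {x i.rev.castSucc} :=
          specializes_iff_closure_subset.mp (hx i.rev)
        have hne : x i.rev.succ ≠ x i.rev.castSucc := by
          intro h
          have h1 := hfx i.rev.succ
          have h2 := hfx i.rev.castSucc
          rw [h] at h1
          rw [h1] at h2
          simp only [Function.comp, Fin.rev_succ, Fin.rev_castSucc, Fin.rev_rev] at h2
          exact hyne _ _ (ne_of_lt (p.step i)) h2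
        have hlt : closure ({x i.rev.succ} : Set X) ⊂ closure {x i.rev.castSucc} := by
          refine hsub.ssubset_of_ne fun h => hne ?_
          have h1 : x i.rev.succ ⤳ x i.rev.castSucc :=
            specializes_iff_closure_subset.mpr h.ge
          have h2 : x i.rev.castSucc ⤳ x i.rev.succ :=
            specializes_iff_closure_subset.mpr h.le
          exact (h1.antisymm h2).eq
        show (⟨closure {x i.castSucc.rev}, _, _⟩ : IrreducibleCloseds X) < ⟨closure {x i.succ.rev}, _, _⟩
        rw [← SetLike.coe_ssubset_coe]
        simpa [Fin.rev_castSucc, Fin.rev_succ] using hlt }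
  exact le_iSup (fun s : LTSeries (IrreducibleCloseds X) => (s.length : WithBot ℕ∞)) q
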